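/- Consider the two-term complex 0 → D/x^n D → D/x^n D → 0 where D is the Weyl algebra C[x,∂] and the map is induced by left multiplication by x^n (i.e., p ↦ x^n p mod x^n D, equivalently the class of [x^n, p]). This map is surjective and its kernel has dimension n^2 over C. -/

import Mathlib

/-!
STATEMENT 3: The map D/x^n D → D/x^n D induced by p ↦ [x^n, p] (D the Weyl algebra)
is surjective, and its kernel has dimension n² over ℂ.
-/
/-- The defining relation of the Weyl algebra: ∂·x = x·∂ + 1. -/
inductive WeylRel : FreeAlgebra ℂ (Fin 2) → FreeAlgebra ℂ (Fin 2) → Prop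
  | comm : WeylRel (FreeAlgebra.ι ℂ (1 : Fin 2) * FreeAlgebra.ι ℂ (0 : Fin 2))
      (FreeAlgebra.ι ℂ (0 : Fin 2) * FreeAlgebra.ι ℂ (1 : Fin 2) + 1)

/-- The Weyl algebra ℂ[x,∂]. -/
abbrev Weyl : Type := RingQuot WeylRel

noncomputable def wX : Weyl := RingQuot.mkAlgHom ℂ WeylRel (FreeAlgebra.ι ℂ (0 : Fin 2))

noncomputable def wD : Weyl := RingQuot.mkAlgHom ℂ WeylRel (FreeAlgebra.ι ℂ (1 : Fin 2))

/-- The degree-`j` homogeneous component of the Weyl algebra (deg x = 1, deg ∂ = -1),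
spanned by the monomials x^a ∂^b with a - b = j. -/
noncomputable def Wcomp (j : ℤ) : Submodule ℂ Weyl :=
  Submodule.span ℂ {w | ∃ a b : ℕ, (a : ℤ) - (b : ℤ) = j ∧ w = wX ^ a * wD ^ b}

/-- The left ideal x^n·D, as a ℂ-subspace of the Weyl algebra. -/
noncomputable def WleftIdeal (n : ℕ) : Submodule ℂ Weyl :=
  LinearMap.range (LinearMap.mulLeft ℂ (wX ^ n))


/-- The commutator map p ↦ [x^n, p] = x^n p - p x^n on the Weyl algebra. -/
noncomputable def commMap (n : ℕ) : Weyl →ₗ[ℂ] Weyl :=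
  LinearMap.mulLeft ℂ (wX ^ n) - LinearMap.mulRight ℂ (wX ^ n)

open Polynomial MulOpposite

noncomputable def Iop : ℂ[X] →ₗ[ℂ] ℂ[X] :=
  (Polynomial.basisMonomials ℂ).constr ℂ fun k => ((k + 1 : ℂ))⁻¹ • Polynomial.X ^ (k + 1)

lemma basisMon_apply (k : ℕ) : (Polynomial.basisMonomials ℂ) k = Polynomial.X ^ k := by
  rw [show ((Polynomial.basisMonomials ℂ) k) = (fun s => Polynomial.monomial s (1:ℂ)) k from
    congrFun (Polynomial.coe_basisMonomials ℂ) k]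
  simp [Polynomial.monomial_one_right_eq_X_pow]

lemma Iop_Xpow (k : ℕ) : Iop (Polynomial.X ^ k) = ((k + 1 : ℂ))⁻¹ • Polynomial.X ^ (k + 1) := by
  rw [← basisMon_apply, Iop, Module.Basis.constr_basis]

lemma deriv_Iop_apply (p : ℂ[X]) : Polynomial.derivative (Iop p) = p := by
  have h : Polynomial.derivative.comp Iop = LinearMap.id := by
    apply (Polynomial.basisMonomials ℂ).ext
    intro k
    rw [basisMon_apply, LinearMap.comp_apply, Iop_Xpow, LinearMap.id_apply, map_smul,
      Polynomial.derivative_X_pow, Nat.add_sub_cancel]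
    rw [smul_eq_C_mul, ← mul_assoc, ← Polynomial.C_mul]
    push_cast
    rw [inv_mul_cancel₀ (Nat.cast_add_one_ne_zero k), Polynomial.C_1, one_mul]
  exact congrArg (fun f => f p) h

lemma coeff0_Iop (p : ℂ[X]) : (Iop p).coeff 0 = 0 := by
  have h : (Polynomial.lcoeff ℂ 0).comp Iop = 0 := by
    apply (Polynomial.basisMonomials ℂ).ext
    intro k
    rw [basisMon_apply, LinearMap.comp_apply, Iop_Xpow]
    simp [Polynomial.coeff_X_pow]
  simpa using congrArg (fun f => f p) h
open Polynomial MulOpposite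

variable (n : ℕ)

noncomputable def Nmap : (Fin n → ℂ[X]) →ₗ[ℂ] (Fin n → ℂ[X]) :=
  LinearMap.pi fun j => if _ : (j : ℕ) = 0 then 0 else
    LinearMap.proj ⟨(j : ℕ) - 1, lt_of_le_of_lt (Nat.sub_le _ _) j.isLt⟩

noncomputable def Dmap : (Fin n → ℂ[X]) →ₗ[ℂ] (Fin n → ℂ[X]) :=
  LinearMap.pi fun j => Polynomial.derivative.comp (LinearMap.proj j)

noncomputable def Xop : (Fin n → ℂ[X]) →ₗ[ℂ] (Fin n → ℂ[X]) := Nmap n + Dmap n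

noncomputable def Mxop : (Fin n → ℂ[X]) →ₗ[ℂ] (Fin n → ℂ[X]) :=
  LinearMap.pi fun j => (LinearMap.mulLeft ℂ (Polynomial.X : ℂ[X])).comp (LinearMap.proj j)

lemma Mxop_apply (v : Fin n → ℂ[X]) (j : Fin n) : Mxop n v j = Polynomial.X * v j := rfl

lemma Xop_apply (v : Fin n → ℂ[X]) (j : Fin n) :
    Xop n v j = (if h : (j : ℕ) = 0 then 0 else
      v ⟨(j : ℕ) - 1, lt_of_le_of_lt (Nat.sub_le _ _) j.isLt⟩) + Polynomial.derivative (v j) := by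
  simp only [Xop, LinearMap.add_apply, Nmap, Dmap, LinearMap.pi_apply]
  split <;> simp_all [LinearMap.proj]

lemma comm_XM : Xop n * Mxop n = Mxop n * Xop n + 1 := by
  apply LinearMap.ext; intro v
  funext j
  simp only [Module.End.mul_apply, LinearMap.add_apply, Module.End.one_apply, Pi.add_apply, Mxop_apply, Xop_apply,
    Polynomial.derivative_mul, Polynomial.derivative_X]
  split <;> ring
-- chunk 3 : sigma, phi
noncomputable def sigma : Weyl →ₐ[ℂ] (Module.End ℂ (Fin n → ℂ[X]))ᵐᵒᵖ :=
  RingQuot.liftAlgHom ℂ ⟨FreeAlgebra.lift ℂ ![op (Xop n), op (Mxop n)], by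
    rintro a b ⟨⟩
    simp only [map_mul, map_add, map_one, FreeAlgebra.lift_ι_apply,
      Matrix.cons_val_one, Matrix.head_cons, Matrix.cons_val_zero]
    rw [← op_mul, ← op_mul, ← op_one, ← op_add, comm_XM]⟩

lemma sigma_wX : sigma n wX = op (Xop n) := by
  rw [wX, sigma, RingQuot.liftAlgHom_mkAlgHom_apply]
  simp [FreeAlgebra.lift_ι_apply]

lemma sigma_wD : sigma n wD = op (Mxop n) := by
  rw [wD, sigma, RingQuot.liftAlgHom_mkAlgHom_apply]
  simp [FreeAlgebra.lift_ι_apply]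

/-- class of x^a ∂^b as element of the concrete model -/
noncomputable def e (a b : ℕ) : Fin n → ℂ[X] :=
  fun j => if (j : ℕ) = a then Polynomial.X ^ b else 0

noncomputable def phi : Weyl →ₗ[ℂ] (Fin n → ℂ[X]) where
  toFun p := ((sigma n) p).unop (e n 0 0)
  map_add' p q := by simp only [map_add, MulOpposite.unop_add, LinearMap.add_apply]
  map_smul' c p := by simp only [map_smul, MulOpposite.unop_smul, LinearMap.smul_apply,
    RingHom.id_apply]

lemma phi_mul (p q : Weyl) : phi n (p * q) = ((sigma n) q).unop (phi n p) := by
  simp only [phi, LinearMap.coe_mk, AddHom.coe_mk, map_mul, MulOpposite.unop_mul,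
    Module.End.mul_apply]

lemma Xop_e (a : ℕ) : Xop n (e n a 0) = e n (a + 1) 0 := by
  funext j
  rw [Xop_apply]
  have hd : Polynomial.derivative (e n a 0 j) = 0 := by
    simp only [e, pow_zero]; split <;> simp
  rw [hd, add_zero]
  by_cases h0 : (j : ℕ) = 0
  · rw [dif_pos h0]
    simp only [e, pow_zero]
    rw [if_neg (by omega)]
  · rw [dif_neg h0]
    simp only [e, pow_zero]
    by_cases hj : (j : ℕ) - 1 = a
    · rw [if_pos hj, if_pos (by omega)]
    · rw [if_neg hj, if_neg (by omega)]

lemma Mxop_e (a b : ℕ) : Mxop n (e n a b) = e n a (b + 1) := by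
  funext j
  rw [Mxop_apply]
  simp only [e]
  split <;> simp [pow_succ, mul_comm]

lemma Xop_pow_e (a : ℕ) : ((Xop n)^a) (e n 0 0) = e n a 0 := by
  induction a with
  | zero => simp
  | succ a ih => rw [pow_succ', Module.End.mul_apply, ih, Xop_e]

lemma Mxop_pow_e (a b : ℕ) : ((Mxop n)^b) (e n a 0) = e n a b := by
  induction b with
  | zero => simp
  | succ b ih => rw [pow_succ', Module.End.mul_apply, ih, Mxop_e]

lemma phi_mono (a b : ℕ) : phi n (wX ^ a * wD ^ b) = e n a b := by
  rw [phi_mul]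
  have h1 : phi n (wX ^ a) = e n a 0 := by
    have : phi n (wX ^ a) = ((sigma n) (wX ^ a)).unop (e n 0 0) := rfl
    rw [this, map_pow, sigma_wX, ← MulOpposite.op_pow, MulOpposite.unop_op, Xop_pow_e]
  rw [h1, map_pow, sigma_wD, ← MulOpposite.op_pow, MulOpposite.unop_op, Mxop_pow_e]

lemma e_n_zero (a : ℕ) (ha : n ≤ a) : e n a 0 = 0 := by
  funext j
  have := j.isLt
  simp only [e, Pi.zero_apply]
  rw [if_neg (by omega)]

lemma phi_ideal (p : Weyl) (hp : p ∈ WleftIdeal n) : phi n p = 0 := by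
  obtain ⟨q, rfl⟩ := hp
  simp only [LinearMap.mulLeft_apply]
  rw [phi_mul]
  have h1 : phi n (wX ^ n) = e n n 0 := by
    simpa using phi_mono n n 0
  rw [h1, e_n_zero n n le_rfl, map_zero]
-- chunk 4 : Weyl spanned by monomials
lemma wDX : wD * wX = wX * wD + 1 := by
  have h := RingQuot.mkAlgHom_rel ℂ WeylRel.comm
  rw [map_mul, map_add, map_mul, map_one] at h
  exact h

lemma wD_mul_wX_pow (c : ℕ) :
    wD * wX ^ (c + 1) = wX ^ (c + 1) * wD + ((c : ℂ) + 1) • wX ^ c := by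
  induction c with
  | zero => simpa using wDX
  | succ c ih =>
    rw [pow_succ (wX) (c+1), ← mul_assoc, ih]
    rw [add_mul, mul_assoc, wDX, smul_mul_assoc, ← pow_succ]
    rw [mul_add, mul_one, ← pow_succ]
    rw [← mul_assoc, ← pow_succ]
    push_cast
    rw [add_smul, one_smul]
    module

noncomputable def Smon : Submodule ℂ Weyl :=
  Submodule.span ℂ (Set.range fun p : ℕ × ℕ => wX ^ p.1 * wD ^ p.2)

lemma mono_mem (a b : ℕ) : wX ^ a * wD ^ b ∈ Smon :=
  Submodule.subset_span ⟨(a, b), rfl⟩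

lemma Smon_mulL : ∀ s ∈ Smon, wX * s ∈ Smon := by
  intro s hs
  induction hs using Submodule.span_induction with
  | mem x hx =>
    obtain ⟨⟨a, b⟩, rfl⟩ := hx
    rw [← mul_assoc, ← pow_succ']
    exact mono_mem _ _
  | zero => simpa using Submodule.zero_mem Smon
  | add x y _ _ hx hy => rw [mul_add]; exact Submodule.add_mem _ hx hy
  | smul c x _ hx => rw [mul_smul_comm]; exact Submodule.smul_mem _ _ hx

lemma Smon_mulR : ∀ s ∈ Smon, s * wD ∈ Smon := by
  intro s hs
  induction hs using Submodule.span_induction with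
  | mem x hx =>
    obtain ⟨⟨a, b⟩, rfl⟩ := hx
    rw [mul_assoc, ← pow_succ]
    exact mono_mem _ _
  | zero => simpa using Submodule.zero_mem Smon
  | add x y _ _ hx hy => rw [add_mul]; exact Submodule.add_mem _ hx hy
  | smul c x _ hx => rw [smul_mul_assoc]; exact Submodule.smul_mem _ _ hx

private lemma Smon_mulL_pow_aux (a : ℕ) (ih : ∀ s ∈ Smon, wX ^ a * s ∈ Smon) :
    ∀ s ∈ Smon, wX ^ a * (wX * s) ∈ Smon := fun s hs => ih _ (Smon_mulL s hs)

lemma Smon_mulL_pow (a : ℕ) : ∀ s ∈ Smon, wX ^ a * s ∈ Smon := by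
  induction a with
  | zero => intro s hs; simpa using hs
  | succ a ih =>
    intro s hs
    rw [pow_succ, mul_assoc]
    exact Smon_mulL_pow_aux a ih s hs

lemma Smon_mulR_pow (d : ℕ) : ∀ s ∈ Smon, s * wD ^ d ∈ Smon := by
  induction d with
  | zero => intro s hs; simpa using hs
  | succ d ih =>
    intro s hs
    rw [pow_succ, ← mul_assoc]
    exact Smon_mulR _ (ih s hs)

lemma D_pow_X_pow_mem (b : ℕ) : ∀ c : ℕ, wD ^ b * wX ^ c ∈ Smon := by
  induction b with
  | zero => intro c; simpa using mono_mem c 0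
  | succ b ih =>
    intro c
    cases c with
    | zero => simpa using mono_mem 0 (b+1)
    | succ c =>
      rw [pow_succ, mul_assoc, wD_mul_wX_pow, mul_add, ← mul_assoc]
      refine Submodule.add_mem _ (Smon_mulR _ (ih (c+1))) ?_
      rw [mul_smul_comm]
      exact Submodule.smul_mem _ _ (ih c)

lemma mono_mul_mono (a b c d : ℕ) : (wX ^ a * wD ^ b) * (wX ^ c * wD ^ d) ∈ Smon := by
  have h1 : wD ^ b * wX ^ c ∈ Smon := D_pow_X_pow_mem b c
  have h2 := Smon_mulR_pow d _ (Smon_mulL_pow a _ h1)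
  have heq : (wX ^ a * wD ^ b) * (wX ^ c * wD ^ d) = wX ^ a * (wD ^ b * wX ^ c) * wD ^ d := by
    rw [mul_assoc, mul_assoc, mul_assoc]
  rw [heq]
  exact h2

lemma Smon_mul_mem : ∀ s ∈ Smon, ∀ t ∈ Smon, s * t ∈ Smon := by
  intro s hs
  induction hs using Submodule.span_induction with
  | mem x hx =>
    intro t ht
    induction ht using Submodule.span_induction with
    | mem y hy =>
      obtain ⟨⟨a, b⟩, rfl⟩ := hx
      obtain ⟨⟨c, d⟩, rfl⟩ := hy
      exact mono_mul_mono a b c d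
    | zero => simpa using Submodule.zero_mem Smon
    | add y z _ _ hy hz => rw [mul_add]; exact Submodule.add_mem _ hy hz
    | smul r y _ hy => rw [mul_smul_comm]; exact Submodule.smul_mem _ _ hy
  | zero => intro t ht; simpa using Submodule.zero_mem Smon
  | add x y _ _ hx hy => intro t ht; rw [add_mul]; exact Submodule.add_mem _ (hx t ht) (hy t ht)
  | smul r x _ hx => intro t ht; rw [smul_mul_assoc]; exact Submodule.smul_mem _ _ (hx t ht)

lemma Smon_top : Smon = ⊤ := by
  rw [Submodule.eq_top_iff']
  intro z
  obtain ⟨w, rfl⟩ := RingQuot.mkAlgHom_surjective ℂ WeylRel z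
  induction w using FreeAlgebra.induction with
  | grade0 r =>
    rw [AlgHom.commutes]
    have : (algebraMap ℂ Weyl) r = r • (wX ^ 0 * wD ^ 0) := by
      simp [Algebra.algebraMap_eq_smul_one]
    rw [this]
    exact Submodule.smul_mem _ _ (mono_mem 0 0)
  | grade1 i =>
    fin_cases i
    · have h : wX ^ 1 * wD ^ 0 = RingQuot.mkAlgHom ℂ WeylRel (FreeAlgebra.ι ℂ ((fun i => i) (⟨0, by omega⟩ : Fin 2))) := by
        simp [wX]
      exact h ▸ mono_mem 1 0
    · have h : wX ^ 0 * wD ^ 1 = RingQuot.mkAlgHom ℂ WeylRel (FreeAlgebra.ι ℂ ((fun i => i) (⟨1, by omega⟩ : Fin 2))) := by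
        simp [wD]
      exact h ▸ mono_mem 0 1
  | mul x y hx hy => rw [map_mul]; exact Smon_mul_mem _ hx _ hy
  | add x y hx hy => rw [map_add]; exact Submodule.add_mem _ hx hy
-- chunk 5 : the equivalence Weyl/WI ≃ V
noncomputable def Bas : Module.Basis ((_ : Fin n) × ℕ) ℂ (Fin n → ℂ[X]) :=
  Pi.basis (fun _ : Fin n => Polynomial.basisMonomials ℂ)

noncomputable def fam : Fin n × ℕ → (Fin n → ℂ[X]) := fun p => e n (p.1 : ℕ) p.2

lemma fam_eq_basis (p : Fin n × ℕ) : fam n p = Bas n ⟨p.1, p.2⟩ := by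
  rw [Bas, Pi.basis_apply]
  funext j
  simp only [fam, e]
  rcases eq_or_ne j p.1 with h | h
  · subst h
    rw [if_pos rfl, Pi.single_eq_same, basisMon_apply]
  · rw [if_neg (fun hc => h (Fin.ext hc)), Pi.single_eq_of_ne h]

lemma fam_eq_comp : fam n = (Bas n) ∘ (Equiv.sigmaEquivProd (Fin n) ℕ).symm :=
  funext fun p => fam_eq_basis n p

lemma fam_li : LinearIndependent ℂ (fam n) := by
  rw [fam_eq_comp]
  exact (Bas n).linearIndependent.comp _ (Equiv.sigmaEquivProd (Fin n) ℕ).symm.injective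

lemma fam_span : Submodule.span ℂ (Set.range (fam n)) = ⊤ := by
  have : Set.range (fam n) = Set.range (Bas n) := by
    rw [fam_eq_comp, Set.range_comp, Equiv.range_eq_univ, Set.image_univ]
  rw [this]
  exact (Bas n).span_eq

noncomputable def gsmall : Fin n × ℕ → Weyl := fun p => wX ^ (p.1 : ℕ) * wD ^ p.2

lemma phi_gsmall (p : Fin n × ℕ) : phi n (gsmall n p) = fam n p := phi_mono n _ _

noncomputable def S0 : Submodule ℂ Weyl := Submodule.span ℂ (Set.range (gsmall n))

lemma mono_ge_mem (a b : ℕ) (ha : n ≤ a) : wX ^ a * wD ^ b ∈ WleftIdeal n := by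
  refine ⟨wX ^ (a - n) * wD ^ b, ?_⟩
  rw [LinearMap.mulLeft_apply, ← mul_assoc, ← pow_add]
  congr 2
  omega

lemma map_mkQ_S0 : Submodule.map (WleftIdeal n).mkQ (S0 n) = ⊤ := by
  rw [Submodule.eq_top_iff']
  intro m
  obtain ⟨z, rfl⟩ := (WleftIdeal n).mkQ_surjective m
  have hz : z ∈ Smon := Smon_top ▸ Submodule.mem_top
  induction hz using Submodule.span_induction with
  | mem x hx =>
    obtain ⟨⟨a, b⟩, rfl⟩ := hx
    rcases lt_or_ge a n with h | h
    · exact ⟨gsmall n (⟨a, h⟩, b), Submodule.subset_span ⟨(⟨a, h⟩, b), rfl⟩, rfl⟩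
    · refine ⟨0, Submodule.zero_mem _, ?_⟩
      rw [map_zero]
      exact ((Submodule.Quotient.mk_eq_zero _).2 (mono_ge_mem n a b h)).symm
  | zero => rw [map_zero]; exact Submodule.zero_mem _
  | add x y _ _ hx hy => rw [map_add]; exact Submodule.add_mem _ hx hy
  | smul c x _ hx => rw [map_smul]; exact Submodule.smul_mem _ _ hx

lemma phi_le_ker : WleftIdeal n ≤ LinearMap.ker (phi n) :=
  fun p hp => phi_ideal n p hp

noncomputable def phibar : (Weyl ⧸ WleftIdeal n) →ₗ[ℂ] (Fin n → ℂ[X]) :=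
  (WleftIdeal n).liftQ (phi n) (phi_le_ker n)

lemma phibar_mkQ (p : Weyl) : phibar n ((WleftIdeal n).mkQ p) = phi n p := rfl

lemma phibar_inj : Function.Injective (phibar n) := by
  rw [← LinearMap.ker_eq_bot, Submodule.eq_bot_iff]
  intro m hm
  have : m ∈ Submodule.map (WleftIdeal n).mkQ (S0 n) := map_mkQ_S0 n ▸ Submodule.mem_top
  obtain ⟨p, hpS, rfl⟩ := Submodule.mem_map.1 this
  rw [LinearMap.mem_ker, phibar_mkQ] at hm
  have hpS' : p ∈ Submodule.span ℂ (Set.range (gsmall n)) := hpS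
  rw [Finsupp.mem_span_range_iff_exists_finsupp] at hpS'
  clear hpS
  rename' hpS' => hpS
  obtain ⟨c, rfl⟩ := hpS
  have hphi : phi n (c.sum fun i r => r • gsmall n i) =
      Finsupp.linearCombination ℂ (fam n) c := by
    rw [map_finsuppSum, Finsupp.linearCombination_apply]
    exact Finsupp.sum_congr fun i _ => by rw [map_smul, phi_gsmall]
  rw [hphi] at hm
  have hc : c = 0 := linearIndependent_iff.1 (fam_li n) c hm
  rw [hc, Finsupp.sum_zero_index, map_zero]

lemma phibar_surj : Function.Surjective (phibar n) := by
  rw [← LinearMap.range_eq_top]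
  rw [eq_top_iff, ← fam_span n, Submodule.span_le]
  rintro v ⟨p, rfl⟩
  exact ⟨(WleftIdeal n).mkQ (gsmall n p), by rw [phibar_mkQ, phi_gsmall]⟩

noncomputable def psi : (Weyl ⧸ WleftIdeal n) ≃ₗ[ℂ] (Fin n → ℂ[X]) :=
  LinearEquiv.ofBijective (phibar n) ⟨phibar_inj n, phibar_surj n⟩
-- chunk 6 : concrete linear algebra for Xop

noncomputable def usol (w' : ℕ → ℂ[X]) : ℕ → ℂ[X]
  | 0 => Iop (w' 0)
  | j+1 => Iop (w' (j+1) - usol w' j)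

lemma Xop_surj : Function.Surjective (Xop n) := by
  intro w
  set w' : ℕ → ℂ[X] := fun j => if h : j < n then w ⟨j, h⟩ else 0 with hw'
  refine ⟨fun j => usol w' (j : ℕ), ?_⟩
  funext j
  rw [Xop_apply]
  have hwj : w' (j : ℕ) = w j := by rw [hw']; simp [j.isLt]
  by_cases h0 : (j : ℕ) = 0
  · rw [dif_pos h0, zero_add, h0, usol, deriv_Iop_apply, ← h0, hwj]
  · rw [dif_neg h0]
    obtain ⟨k, hk⟩ : ∃ k, (j : ℕ) = k + 1 := ⟨(j : ℕ) - 1, by omega⟩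
    simp only [hk, Nat.add_sub_cancel]
    rw [usol, deriv_Iop_apply, ← hk, hwj]
    ring

section KerEquiv
variable {W : Type*} [AddCommGroup W] [Module ℂ W]

noncomputable def kerSuccEquiv (f J : W →ₗ[ℂ] W) (hJ : ∀ w, f (J w) = w) (k : ℕ) :
    LinearMap.ker (f ^ (k + 1)) ≃ₗ[ℂ] LinearMap.ker f × LinearMap.ker (f ^ k) where
  toFun v := (⟨(v : W) - J (f v), by
      rw [LinearMap.mem_ker, map_sub, hJ, sub_self]⟩,
    ⟨f v, by
      have hv := v.2
      rw [LinearMap.mem_ker] at hv ⊢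
      rw [← Module.End.mul_apply, ← pow_succ, hv]⟩)
  invFun uw := ⟨(uw.1 : W) + J (uw.2 : W), by
      have h1 := uw.1.2
      have h2 := uw.2.2
      rw [LinearMap.mem_ker] at h1 h2 ⊢
      rw [pow_succ, Module.End.mul_apply, map_add, h1, hJ, zero_add, h2]⟩
  left_inv v := by
    apply Subtype.ext
    simp only
    rw [sub_add_cancel]
  right_inv uw := by
    have h1 := uw.1.2
    rw [LinearMap.mem_ker] at h1
    apply Prod.ext
    · apply Subtype.ext
      simp only
      rw [map_add, h1, hJ, zero_add, add_sub_cancel_right]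
    · apply Subtype.ext
      simp only
      rw [map_add, h1, hJ, zero_add]
  map_add' v w := by
    apply Prod.ext <;> apply Subtype.ext <;>
      simp only [Submodule.coe_add, map_add, Prod.fst_add, Prod.snd_add] <;> abel
  map_smul' c v := by
    apply Prod.ext <;> apply Subtype.ext <;>
      simp only [Submodule.coe_smul, map_smul, RingHom.id_apply, Prod.smul_fst, Prod.smul_snd,
        smul_sub]

end KerEquiv

noncomputable def Cmap : (Fin n → ℂ[X]) →ₗ[ℂ] (Fin n → ℂ) :=
  LinearMap.pi fun j => (Polynomial.lcoeff ℂ 0).comp (LinearMap.proj j)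

lemma Cmap_apply (v : Fin n → ℂ[X]) (j : Fin n) : Cmap n v j = (v j).coeff 0 := rfl

noncomputable def Cres : LinearMap.ker (Xop n) →ₗ[ℂ] (Fin n → ℂ) :=
  (Cmap n).comp (LinearMap.ker (Xop n)).subtype

lemma Cres_inj : Function.Injective (Cres n) := by
  rw [← LinearMap.ker_eq_bot, Submodule.eq_bot_iff]
  rintro ⟨v, hv⟩ hc
  rw [LinearMap.mem_ker] at hv
  have hc0 : ∀ j : Fin n, (v j).coeff 0 = 0 := by
    intro j
    exact congrFun hc j
  apply Subtype.ext
  show v = 0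
  have key : ∀ k : ℕ, ∀ hk : k < n, v ⟨k, hk⟩ = 0 := by
    intro k
    induction k with
    | zero =>
      intro hk
      have := congrFun hv ⟨0, hk⟩
      rw [Xop_apply] at this
      rw [dif_pos rfl, zero_add] at this
      have hd : Polynomial.derivative (v ⟨0, hk⟩) = 0 := this
      rw [Polynomial.eq_C_of_derivative_eq_zero hd, hc0, map_zero]
    | succ k ih =>
      intro hk
      have := congrFun hv ⟨k+1, hk⟩
      rw [Xop_apply] at this
      rw [dif_neg (by simp)] at this
      have hprev : v ⟨k, by omega⟩ = 0 := ih (by omega)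
      rw [show (⟨(k+1) - 1, by omega⟩ : Fin n) = ⟨k, by omega⟩ from rfl, hprev, zero_add] at this
      rw [Polynomial.eq_C_of_derivative_eq_zero this, hc0, map_zero]
  funext j
  have := key (j : ℕ) j.isLt
  simpa using this

noncomputable def csol (c' : ℕ → ℂ) : ℕ → ℂ[X]
  | 0 => Polynomial.C (c' 0)
  | j+1 => Polynomial.C (c' (j+1)) - Iop (csol c' j)

lemma Cres_surj : Function.Surjective (Cres n) := by
  intro c
  set c' : ℕ → ℂ := fun j => if h : j < n then c ⟨j, h⟩ else 0 with hc'
  have hker : (fun j : Fin n => csol c' (j : ℕ)) ∈ LinearMap.ker (Xop n) := by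
    rw [LinearMap.mem_ker]
    funext j
    rw [Xop_apply]
    by_cases h0 : (j : ℕ) = 0
    · rw [dif_pos h0, zero_add, h0, csol]
      simp
    · rw [dif_neg h0]
      obtain ⟨k, hk⟩ : ∃ k, (j : ℕ) = k + 1 := ⟨(j : ℕ) - 1, by omega⟩
      simp only [hk, Nat.add_sub_cancel, Pi.zero_apply]
      rw [csol, map_sub, Polynomial.derivative_C, deriv_Iop_apply]
      ring
  refine ⟨⟨_, hker⟩, ?_⟩
  funext j
  show (Cmap n) (fun j : Fin n => csol c' (j : ℕ)) j = c j
  rw [Cmap_apply]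
  have hcoeff : ∀ m : ℕ, (csol c' m).coeff 0 = c' m := by
    intro m
    cases m with
    | zero => rw [csol, Polynomial.coeff_C_zero]
    | succ m => rw [csol, Polynomial.coeff_sub, Polynomial.coeff_C_zero, coeff0_Iop, sub_zero]
  rw [hcoeff, hc']
  simp [j.isLt]

noncomputable def kerXopEquiv : LinearMap.ker (Xop n) ≃ₗ[ℂ] (Fin n → ℂ) :=
  LinearEquiv.ofBijective (Cres n) ⟨Cres_inj n, Cres_surj n⟩

instance : FiniteDimensional ℂ (LinearMap.ker (Xop n)) :=
  Module.Finite.equiv (kerXopEquiv n).symm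

lemma finrank_ker_Xop : Module.finrank ℂ (LinearMap.ker (Xop n)) = n := by
  rw [(kerXopEquiv n).finrank_eq, Module.finrank_fin_fun]

lemma finrank_ker_Xop_pow (k : ℕ) :
    FiniteDimensional ℂ (LinearMap.ker ((Xop n) ^ k)) ∧
      Module.finrank ℂ (LinearMap.ker ((Xop n) ^ k)) = k * n := by
  obtain ⟨J, hJ⟩ := (Xop n).exists_rightInverse_of_surjective
    (LinearMap.range_eq_top.2 (Xop_surj n))
  have hJ' : ∀ w, (Xop n) (J w) = w := fun w => congrFun (congrArg (fun f => f.toFun) hJ) w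
  induction k with
  | zero =>
    constructor
    · rw [pow_zero]
      have : LinearMap.ker (1 : (Fin n → ℂ[X]) →ₗ[ℂ] (Fin n → ℂ[X])) = ⊥ := by
        rw [Module.End.one_eq_id, LinearMap.ker_id]
      rw [this]
      infer_instance
    · rw [pow_zero, Module.End.one_eq_id, LinearMap.ker_id]
      simp
  | succ k ih =>
    obtain ⟨ihfin, ihrank⟩ := ih
    haveI := ihfin
    have heq := kerSuccEquiv (Xop n) J hJ' k
    constructor
    · exact Module.Finite.equiv heq.symm
    · rw [heq.finrank_eq, Module.finrank_prod, finrank_ker_Xop, ihrank]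
      ring
-- chunk 7 : assembly

lemma psi_mkQ (p : Weyl) : psi n ((WleftIdeal n).mkQ p) = phi n p := rfl

lemma psi_mkQ' (p : Weyl) :
    ((psi n : (Weyl ⧸ WleftIdeal n) ≃ₗ[ℂ] (Fin n → ℂ[X])) :
      (Weyl ⧸ WleftIdeal n) →ₗ[ℂ] (Fin n → ℂ[X])) ((WleftIdeal n).mkQ p) = phi n p := rfl

lemma phi_commMap (p : Weyl) : phi n (commMap n p) = -((Xop n) ^ n) (phi n p) := by
  have h1 : commMap n p = wX ^ n * p - p * wX ^ n := rfl
  rw [h1, map_sub]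
  have h2 : phi n (wX ^ n * p) = 0 := phi_ideal n _ ⟨p, rfl⟩
  have h3 : phi n (p * wX ^ n) = ((Xop n) ^ n) (phi n p) := by
    rw [phi_mul, map_pow, sigma_wX, ← MulOpposite.op_pow, MulOpposite.unop_op]
  rw [h2, h3, zero_sub]

lemma ker_phi_le : LinearMap.ker (phi n) ≤ WleftIdeal n := by
  intro q hq
  rw [LinearMap.mem_ker] at hq
  have : phibar n ((WleftIdeal n).mkQ q) = 0 := hq
  have h0 : (WleftIdeal n).mkQ q = 0 := phibar_inj n (by rw [this, map_zero])
  exact (Submodule.Quotient.mk_eq_zero _).1 h0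

lemma Xop_pow_surj : Function.Surjective
    (((Xop n) ^ n : (Fin n → ℂ[X]) →ₗ[ℂ] (Fin n → ℂ[X])) :
      (Fin n → ℂ[X]) → (Fin n → ℂ[X])) := by
  intro v
  obtain ⟨w, hw⟩ := (Xop_surj n).iterate n v
  exact ⟨w, by rw [Module.End.pow_apply]; exact hw⟩

lemma phi_surj : Function.Surjective (phi n) := by
  intro v
  obtain ⟨m, hm⟩ := phibar_surj n v
  obtain ⟨p, rfl⟩ := (WleftIdeal n).mkQ_surjective m
  exact ⟨p, hm⟩

theorem stmt3 (n : ℕ) (hn : 1 ≤ n) :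
    (∀ q : Weyl ⧸ WleftIdeal n, ∃ p : Weyl, (WleftIdeal n).mkQ (commMap n p) = q) ∧
    Module.finrank ℂ
      (Submodule.map (WleftIdeal n).mkQ (Submodule.comap (commMap n) (WleftIdeal n)))
      = n ^ 2 := by
  constructor
  · intro q
    obtain ⟨w, hw⟩ := Xop_pow_surj n (-(psi n q))
    obtain ⟨p, hp⟩ := phi_surj n w
    refine ⟨p, (psi n).injective ?_⟩
    rw [psi_mkQ, phi_commMap, hp, hw, neg_neg]
  · have hmap : Submodule.map ((psi n : (Weyl ⧸ WleftIdeal n) →ₗ[ℂ] (Fin n → ℂ[X])))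
        (Submodule.map (WleftIdeal n).mkQ (Submodule.comap (commMap n) (WleftIdeal n)))
        = LinearMap.ker ((Xop n) ^ n) := by
      apply le_antisymm
      · rintro v ⟨m, ⟨p, hp, rfl⟩, rfl⟩
        rw [LinearMap.mem_ker]
        have hp' : commMap n p ∈ WleftIdeal n := Submodule.mem_comap.1 hp
        have h0 : phi n (commMap n p) = 0 := phi_ideal n _ hp'
        rw [phi_commMap] at h0
        have := neg_eq_zero.1 h0
        rw [psi_mkQ']
        exact this
      · intro v hv
        rw [LinearMap.mem_ker] at hv
        obtain ⟨p, hp⟩ := phi_surj n v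
        refine ⟨(WleftIdeal n).mkQ p, ⟨p, ?_, rfl⟩, by rw [psi_mkQ', hp]⟩
        show commMap n p ∈ WleftIdeal n
        apply ker_phi_le
        rw [LinearMap.mem_ker, phi_commMap, hp, hv, neg_zero]
    have := LinearEquiv.finrank_map_eq (psi n)
      (Submodule.map (WleftIdeal n).mkQ (Submodule.comap (commMap n) (WleftIdeal n)))
    rw [← this, hmap, (finrank_ker_Xop_pow n n).2, sq]
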